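/- arXiv:1806.06170 — 2 statements merged into one kernel-verified Lean document; each statement's English description precedes it below -/
import Mathlib

section
/- Consider an absorbing MDP and two stationary policies π and σ. If σ(·|x) is absolutely continuous with respect to π(·|x) for every x ∈ X, then q_n^σ is absolutely continuous with respect to q_n^π for every n = 0,1,…, and consequently the occupancy marginal q^σ is absolutely continuous with respect to q^π. -/
open MeasureTheory ProbabilityTheory Filter Topology
open scoped ENNReal NNReal

namespace PaperMDP

variable {S A : Type*} [MeasurableSpace S] [MeasurableSpace A]

/-- Histories up to time `t`: states `x_0,…,x_t` and actions `a_0,…,a_{t-1}`. -/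
abbrev Hist (S A : Type*) (t : ℕ) : Type _ := (Fin (t + 1) → S) × (Fin t → A)

/-- A Markov decision process model: action sets `act x` with measurable graph admitting a
measurable selector, and a transition probability kernel `p`.  The initial distribution is
supplied separately. -/
structure MDP (S A : Type*) [MeasurableSpace S] [MeasurableSpace A] where
  act : S → Set A
  act_nonempty : ∀ x, (act x).Nonempty
  graph_meas : MeasurableSet {q : S × A | q.2 ∈ act q.1}
  sel0 : S → A
  sel0_meas : Measurable sel0
  sel0_mem : ∀ x, sel0 x ∈ act x
  p : Kernel (S × A) S
  p_markov : IsMarkovKernel p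

variable (M : MDP S A)

/-- A general (randomized, history-dependent) policy. -/
structure Policy where
  ker : (t : ℕ) → Kernel (Hist S A t) A
  prob : ∀ t, IsMarkovKernel (ker t)
  feasible : ∀ t (h : Hist S A t), ker t h {a | a ∈ M.act (h.1 (Fin.last t))} = 1

/-- A measurable selector, identified with a deterministic policy. -/
structure Selector where
  toFun : S → A
  meas : Measurable toFun
  mem : ∀ x, toFun x ∈ M.act x

/-- A stationary (randomized) policy. -/
structure StatPolicy where
  ker : Kernel S A
  prob : IsMarkovKernel ker
  feasible : ∀ x, ker x {a | a ∈ M.act x} = 1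

/-- A nonrandomized Markov policy: a sequence of measurable selectors. -/
structure MarkovNR where
  sel : ℕ → S → A
  meas : ∀ t, Measurable (sel t)
  mem : ∀ t x, sel t x ∈ M.act x

variable {M}

/-- The policy determined by a selector (a deterministic policy). -/
noncomputable def Selector.policy (φ : Selector M) : Policy M where
  ker t := Kernel.deterministic (fun h : Hist S A t => φ.toFun (h.1 (Fin.last t)))
    (φ.meas.comp ((measurable_pi_apply (Fin.last t)).comp measurable_fst))
  prob t := by infer_instance
  feasible t h := by
    rw [Kernel.deterministic_apply]
    exact Measure.dirac_apply_of_mem (φ.mem _)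

/-- The policy determined by a stationary policy. -/
noncomputable def StatPolicy.policy (s : StatPolicy M) : Policy M where
  ker t := s.ker.comap (fun h : Hist S A t => h.1 (Fin.last t))
    ((measurable_pi_apply (Fin.last t)).comp measurable_fst)
  prob t := by have := s.prob; infer_instance
  feasible t h := by rw [Kernel.comap_apply]; exact s.feasible _

/-- The policy determined by a nonrandomized Markov policy. -/
noncomputable def MarkovNR.policy (φ : MarkovNR M) : Policy M where
  ker t := Kernel.deterministic (fun h : Hist S A t => φ.sel t (h.1 (Fin.last t)))
    ((φ.meas t).comp ((measurable_pi_apply (Fin.last t)).comp measurable_fst))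
  prob t := by infer_instance
  feasible t h := by
    rw [Kernel.deterministic_apply]
    exact Measure.dirac_apply_of_mem (φ.mem _ _)

/-- Finite-horizon strategic (history) measures, built by the Ionescu–Tulcea recursion from the
initial distribution `μ`, the policy `π` and the transition kernel `M.p`. -/
noncomputable def histMeas (μ : Measure S) (π : Policy M) : (t : ℕ) → Measure (Hist S A t)
  | 0 => μ.map (fun x => (fun _ => x, fun i => i.elim0))
  | (t + 1) => (histMeas μ π t).bind (fun h =>
      (π.ker t h).bind (fun a =>
        (M.p (h.1 (Fin.last t), a)).map (fun y => (Fin.snoc h.1 y, Fin.snoc h.2 a))))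

/-- The joint distribution of the state-action pair `(x_t, a_t)` under policy `π`. -/
noncomputable def saMeas (μ : Measure S) (π : Policy M) (t : ℕ) : Measure (S × A) :=
  (histMeas μ π t).bind (fun h => (π.ker t h).map (fun a => (h.1 (Fin.last t), a)))

/-- The distribution of the state `x_t` under policy `π`. -/
noncomputable def stateMeas (μ : Measure S) (π : Policy M) (t : ℕ) : Measure S :=
  (histMeas μ π t).map (fun h => h.1 (Fin.last t))

/-- `survive μ π star t = P^π(T^{star} > t)`, the probability that the process has not yet
reached the absorbing state `star` by time `t`. -/
noncomputable def survive (μ : Measure S) (π : Policy M) (star : S) (t : ℕ) : ℝ≥0∞ :=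
  histMeas μ π t {h | ∀ s, h.1 s ≠ star}

/-- The expected total reward vector `v^π` (well defined whenever the series converges;
for absorbing MDPs with bounded rewards vanishing at the absorbing state this coincides with
`E^π Σ_{t<T} r(x_t,a_t)`). -/
noncomputable def perf (μ : Measure S) {N : ℕ} (r : S × A → Fin N → ℝ) (π : Policy M) :
    Fin N → ℝ :=
  fun n => ∑' t : ℕ, ∫ z, r z n ∂(saMeas μ π t)

/-- The expected total reward for a single criterion. -/
noncomputable def perfR (μ : Measure S) (r : S × A → ℝ) (π : Policy M) : ℝ :=
  ∑' t : ℕ, ∫ z, r z ∂(saMeas μ π t)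

/-- The expected total discounted reward vector `v_β^π`. -/
noncomputable def dperf (μ : Measure S) {N : ℕ} (r : S × A → Fin N → ℝ) (β : ℝ)
    (π : Policy M) : Fin N → ℝ :=
  fun n => ∑' t : ℕ, β ^ t * ∫ z, r z n ∂(saMeas μ π t)

variable (M)

/-- The set of performance vectors of all policies. -/
def perfSet (μ : Measure S) {N : ℕ} (r : S × A → Fin N → ℝ) : Set (Fin N → ℝ) :=
  {v | ∃ π : Policy M, perf μ r π = v}

/-- The set of performance vectors of deterministic policies. -/
def perfSetDet (μ : Measure S) {N : ℕ} (r : S × A → Fin N → ℝ) : Set (Fin N → ℝ) :=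
  {v | ∃ φ : Selector M, perf μ r φ.policy = v}

/-- The set of performance vectors of stationary policies. -/
def perfSetStat (μ : Measure S) {N : ℕ} (r : S × A → Fin N → ℝ) : Set (Fin N → ℝ) :=
  {v | ∃ s : StatPolicy M, perf μ r s.policy = v}

/-- The set of scalar performance values of all policies (single criterion). -/
def perfRSet (μ : Measure S) (r : S × A → ℝ) : Set ℝ :=
  {v | ∃ π : Policy M, perfR μ r π = v}

/-- The set of scalar performance values of deterministic policies (single criterion). -/
def perfRSetDet (μ : Measure S) (r : S × A → ℝ) : Set ℝ :=
  {v | ∃ φ : Selector M, perfR μ r φ.policy = v}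

/-- The set of discounted performance vectors of all policies. -/
def dperfSet (μ : Measure S) {N : ℕ} (r : S × A → Fin N → ℝ) (β : ℝ) : Set (Fin N → ℝ) :=
  {v | ∃ π : Policy M, dperf μ r β π = v}

/-- The set of discounted performance vectors of deterministic policies. -/
def dperfSetDet (μ : Measure S) {N : ℕ} (r : S × A → Fin N → ℝ) (β : ℝ) : Set (Fin N → ℝ) :=
  {v | ∃ φ : Selector M, dperf μ r β φ.policy = v}

/-- An MDP (with initial distribution `μ`, reward `r`, state space `X̄ = X ∪ {star}`) is
absorbing. -/
structure Absorbing (μ : Measure S) {N : ℕ} (r : S × A → Fin N → ℝ) (star : S) (abar : A) :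
    Prop where
  mu_prob : IsProbabilityMeasure μ
  mu_star : μ {star} = 0
  act_star : M.act star = {abar}
  p_star : M.p (star, abar) {star} = 1
  r_star : ∀ n, r (star, abar) n = 0
  hit_bdd : ∃ L : ℝ, ∀ π : Policy M, (∑' t : ℕ, survive μ π star t) ≤ ENNReal.ofReal L

/-- A uniformly absorbing MDP:  `sup_{π ∈ 𝕄} E^π Σ_{t ≥ n} 1{t < T} → 0` as `n → ∞`. -/
structure UnifAbsorbing (μ : Measure S) {N : ℕ} (r : S × A → Fin N → ℝ) (star : S) (abar : A)
    extends Absorbing M μ r star abar : Prop where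
  unif : Tendsto (fun n : ℕ => ⨆ φ : MarkovNR M, ∑' t : ℕ, survive μ φ.policy star (n + t))
    atTop (𝓝 (0 : ℝ≥0∞))

/-- An absorbing MDP is atomless: the initial distribution and the transition probabilities are
atomless on `X = X̄ \ {star}`. -/
def AtomlessAbs (μ : Measure S) (star : S) : Prop :=
  (∀ x, x ≠ star → μ {x} = 0) ∧
    ∀ x y a, x ≠ star → y ≠ star → a ∈ M.act x → M.p (x, a) {y} = 0

/-- A (discounted) MDP is atomless. -/
def AtomlessD (μ : Measure S) : Prop :=
  (∀ x, μ {x} = 0) ∧ ∀ x y a, a ∈ M.act x → M.p (x, a) {y} = 0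

variable {M}

/-- The occupancy measure `Q^π` on `X × A` (where `X = X̄ \ {star}`). -/
noncomputable def occMeas (μ : Measure S) (π : Policy M) (star : S) : Measure (S × A) :=
  (Measure.sum fun t : ℕ => saMeas μ π t).restrict {z : S × A | z.1 ≠ star}

/-- `q_n^π`, the distribution of `x_n` restricted to `X = X̄ \ {star}`. -/
noncomputable def qn (μ : Measure S) (π : Policy M) (star : S) (n : ℕ) : Measure S :=
  (stateMeas μ π n).restrict {x | x ≠ star}

/-- The occupancy marginal `q^π = Σ_n q_n^π` on `X`. -/
noncomputable def qMeas (μ : Measure S) (π : Policy M) (star : S) : Measure S :=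
  Measure.sum fun n : ℕ => qn μ π star n

/-- Distance in total variation between two (finite) measures. -/
noncomputable def dTV {Z : Type*} [MeasurableSpace Z] (μ ν : Measure Z) : ℝ≥0∞ :=
  ⨆ (s : Set Z) (_ : MeasurableSet s), max (μ s - ν s) (ν s - μ s)

/-- `M'` is a submodel of `M`: same state and action spaces and transition probabilities, and
smaller action sets. -/
def IsSubmodel (M' M : MDP S A) : Prop :=
  M'.p = M.p ∧ ∀ x, M'.act x ⊆ M.act x

/-- The stationary policy `π*` averaging two deterministic policies:
`π*(B|x) = ½(1{φ⁰(x) ∈ B} + 1{φ¹(x) ∈ B})`. -/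
noncomputable def mixStat (f0 f1 : Selector M) : StatPolicy M where
  ker :=
    { toFun := fun x => (2 : ℝ≥0∞)⁻¹ • (Measure.dirac (f0.toFun x) + Measure.dirac (f1.toFun x))
      measurable' := by
        apply Measure.measurable_of_measurable_coe
        intro s hs
        simp_rw [Measure.smul_apply, Measure.add_apply, smul_eq_mul,
          Measure.dirac_apply' _ hs]
        exact (((measurable_one.indicator hs).comp f0.meas).add
          ((measurable_one.indicator hs).comp f1.meas)).const_mul _ }
  prob := by
    constructor
    intro x
    constructor
    show ((2 : ℝ≥0∞)⁻¹ • (Measure.dirac (f0.toFun x) + Measure.dirac (f1.toFun x))) Set.univ = 1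
    rw [Measure.smul_apply, Measure.add_apply, measure_univ, measure_univ, smul_eq_mul]
    rw [one_add_one_eq_two, ENNReal.inv_mul_cancel two_ne_zero (by simp)]
  feasible x := by
    show ((2 : ℝ≥0∞)⁻¹ • (Measure.dirac (f0.toFun x) + Measure.dirac (f1.toFun x)))
      {a | a ∈ M.act x} = 1
    rw [Measure.smul_apply, Measure.add_apply,
      Measure.dirac_apply_of_mem (show f0.toFun x ∈ {a | a ∈ M.act x} from f0.mem x),
      Measure.dirac_apply_of_mem (show f1.toFun x ∈ {a | a ∈ M.act x} from f1.mem x),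
      smul_eq_mul, one_add_one_eq_two,
      ENNReal.inv_mul_cancel two_ne_zero (by simp)]

/-- A point `v` of the performance set allows the dimensionality reduction. -/
def AllowsDimRed (M : MDP S A) (μ : Measure S) {N : ℕ} (r : S × A → Fin N → ℝ)
    (v : Fin N → ℝ) : Prop :=
  ∃ (i : Fin N) (b : Fin N → ℝ) (d : ℝ) (M' : MDP S A), IsSubmodel M' M ∧
    v ∈ perfSet M' μ r ∧
    ∀ w ∈ perfSet M' μ r, w i = d + ∑ j ∈ Finset.univ.erase i, b j * w j

end PaperMDP


section Aux

open PaperMDP MeasureTheory ProbabilityTheory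

variable {S A : Type*} [MeasurableSpace S] [MeasurableSpace A]

/-- Absolute continuity is preserved by `Measure.bind`. -/
lemma PaperMDP.bind_ac {α β : Type*} [MeasurableSpace α] [MeasurableSpace β]
    {ν μ : Measure α} {f g : α → Measure β}
    (hνμ : ν ≪ μ) (hfg : ∀ a, f a ≪ g a) (hf : Measurable f) (hg : Measurable g) :
    ν.bind f ≪ μ.bind g := by
  refine Measure.AbsolutelyContinuous.mk fun s hs h0 => ?_
  rw [Measure.bind_apply hs hg.aemeasurable] at h0
  rw [Measure.bind_apply hs hf.aemeasurable]
  have hgm : Measurable fun a => g a s := (Measure.measurable_coe hs).comp hg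
  have hae : ∀ᵐ a ∂μ, g a s = 0 := by
    have := (lintegral_eq_zero_iff hgm).1 h0
    filter_upwards [this] with a ha using ha
  have haef : ∀ᵐ a ∂ν, f a s = 0 := by
    refine hνμ.ae_le ?_
    filter_upwards [hae] with a ha using (hfg a) ha
  have hfm : Measurable fun a => (f a) s := (Measure.measurable_coe hs).comp hf
  exact (lintegral_eq_zero_iff hfm).2 (by filter_upwards [haef] with a ha using ha)

lemma PaperMDP.measurable_snocPair {t : ℕ} :
    Measurable (fun q : (Hist S A t × A) × S =>
      ((Fin.snoc q.1.1.1 q.2, Fin.snoc q.1.1.2 q.1.2) : Hist S A (t + 1))) := by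
  refine Measurable.prod ?_ ?_
  · apply measurable_pi_lambda
    intro i
    refine Fin.lastCases ?_ (fun j => ?_) i
    · simpa using measurable_snd
    · simpa [Function.comp_def] using
        ((measurable_pi_apply j).comp (measurable_fst.comp (measurable_fst.comp measurable_fst)))
  · apply measurable_pi_lambda
    intro i
    refine Fin.lastCases ?_ (fun j => ?_) i
    · simpa [Function.comp_def] using (measurable_snd.comp measurable_fst)
    · simpa [Function.comp_def] using
        ((measurable_pi_apply j).comp (measurable_snd.comp (measurable_fst.comp measurable_fst)))

/-- The one-step transition measure in the Ionescu–Tulcea recursion. -/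
noncomputable def PaperMDP.step (M : MDP S A) {t : ℕ} (h : Hist S A t) (a : A) :
    Measure (Hist S A (t + 1)) :=
  (M.p (h.1 (Fin.last t), a)).map (fun y => (Fin.snoc h.1 y, Fin.snoc h.2 a))

lemma PaperMDP.measurable_step (M : MDP S A) {t : ℕ} :
    Measurable (fun q : Hist S A t × A => PaperMDP.step M q.1 q.2) := by
  haveI := M.p_markov
  apply Measure.measurable_of_measurable_coe
  intro s hs
  have hm : Measurable fun q : Hist S A t × A => (q.1.1 (Fin.last t), q.2) :=
    (((measurable_pi_apply (Fin.last t)).comp (measurable_fst.comp measurable_fst))).prodMk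
      measurable_snd
  set φ : (Hist S A t × A) × S → Hist S A (t + 1) :=
    fun q => (Fin.snoc q.1.1.1 q.2, Fin.snoc q.1.1.2 q.1.2) with hφ
  have hφm : Measurable φ := PaperMDP.measurable_snocPair
  have key : Measurable fun q : Hist S A t × A =>
      (M.p.comap (fun q : Hist S A t × A => (q.1.1 (Fin.last t), q.2)) hm) q
        (Prod.mk q ⁻¹' (φ ⁻¹' s)) :=
    Kernel.measurable_kernel_prodMk_left (hφm hs)
  convert key using 2 with q
  have hmq : Measurable fun y : S =>
      ((Fin.snoc q.1.1 y, Fin.snoc q.1.2 q.2) : Hist S A (t + 1)) :=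
    hφm.comp measurable_prodMk_left
  simp only [PaperMDP.step]
  rw [Measure.map_apply hmq hs, Kernel.comap_apply]
  rfl

lemma PaperMDP.measurable_bindStep (M : MDP S A) {t : ℕ}
    (κ : Kernel (Hist S A t) A) [IsSFiniteKernel κ] :
    Measurable (fun h : Hist S A t => (κ h).bind (PaperMDP.step M h)) := by
  apply Measure.measurable_of_measurable_coe
  intro s hs
  have hstep : Measurable fun q : Hist S A t × A => PaperMDP.step M q.1 q.2 :=
    PaperMDP.measurable_step M
  have heq : ∀ h : Hist S A t,
      (κ h).bind (PaperMDP.step M h) s = ∫⁻ a, PaperMDP.step M h a s ∂(κ h) := fun h =>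
    Measure.bind_apply hs (show Measurable (PaperMDP.step M h) from
      hstep.comp measurable_prodMk_left).aemeasurable
  simp_rw [heq]
  exact Measurable.lintegral_kernel_prod_right
    (f := fun h a => PaperMDP.step M h a s)
    ((Measure.measurable_coe hs).comp hstep)

lemma PaperMDP.hist_ac (M : MDP S A) (μ : Measure S) (π σ : StatPolicy M)
    (hac : ∀ x : S, σ.ker x ≪ π.ker x) (t : ℕ) :
    histMeas μ σ.policy t ≪ histMeas μ π.policy t := by
  induction t with
  | zero => simp only [histMeas]; exact Measure.AbsolutelyContinuous.rfl
  | succ t ih =>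
    haveI := σ.policy.prob t
    haveI := π.policy.prob t
    show (histMeas μ σ.policy t).bind
        (fun h => ((σ.policy.ker t) h).bind (PaperMDP.step M h)) ≪
      (histMeas μ π.policy t).bind
        (fun h => ((π.policy.ker t) h).bind (PaperMDP.step M h))
    refine PaperMDP.bind_ac ih (fun h => ?_)
      (PaperMDP.measurable_bindStep M (σ.policy.ker t))
      (PaperMDP.measurable_bindStep M (π.policy.ker t))
    have hσ : (σ.policy.ker t) h = σ.ker (h.1 (Fin.last t)) :=
      Kernel.comap_apply _ ((measurable_pi_apply (Fin.last t)).comp measurable_fst) _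
    have hπ : (π.policy.ker t) h = π.ker (h.1 (Fin.last t)) :=
      Kernel.comap_apply _ ((measurable_pi_apply (Fin.last t)).comp measurable_fst) _
    rw [hσ, hπ]
    exact PaperMDP.bind_ac (hac _) (fun _ => Measure.AbsolutelyContinuous.rfl)
      ((PaperMDP.measurable_step M).comp measurable_prodMk_left)
      ((PaperMDP.measurable_step M).comp measurable_prodMk_left)

lemma PaperMDP.sum_ac {α : Type*} [MeasurableSpace α] {ν μ : ℕ → Measure α}
    (h : ∀ n, ν n ≪ μ n) : Measure.sum ν ≪ Measure.sum μ := by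
  refine Measure.AbsolutelyContinuous.mk fun s hs h0 => ?_
  rw [Measure.sum_apply _ hs] at h0 ⊢
  have hz : ∀ n, μ n s = 0 := by
    intro n
    exact le_antisymm (h0 ▸ ENNReal.le_tsum n) zero_le
  simp [fun n => (h n) (hz n)]

end Aux

open PaperMDP in
/-- For an absorbing MDP and stationary policies `π`, `σ`, if
`σ(·|x) ≪ π(·|x)` for all `x`, then `q_n^σ ≪ q_n^π` for all `n` and `q^σ ≪ q^π`. -/
theorem qn_absolutelyContinuous
    {S A : Type*} [MeasurableSpace S] [StandardBorelSpace S]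
    [MeasurableSpace A] [StandardBorelSpace A]
    (M : MDP S A) (μ : MeasureTheory.Measure S) (star : S) (abar : A)
    {N : ℕ} (r : S × A → Fin N → ℝ)
    (hAbs : Absorbing M μ r star abar)
    (π σ : StatPolicy M)
    (hac : ∀ x : S, σ.ker x ≪ π.ker x) :
    (∀ n : ℕ, qn μ σ.policy star n ≪ qn μ π.policy star n) ∧
      qMeas μ σ.policy star ≪ qMeas μ π.policy star := by
  have hq : ∀ n : ℕ, qn μ σ.policy star n ≪ qn μ π.policy star n := by
    intro n
    have hhist := PaperMDP.hist_ac M μ π σ hac n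
    have hmap : Measurable fun h : Hist S A n => h.1 (Fin.last n) :=
      (measurable_pi_apply (Fin.last n)).comp measurable_fst
    exact (hhist.map hmap).restrict _
  exact ⟨hq, PaperMDP.sum_ac hq⟩
end

section
/- Consider a uniformly absorbing MDP and two deterministic policies φ⁰ and φ¹, with π* the stationary policy π*(B|x) = ½(1{φ⁰(x) ∈ B} + 1{φ¹(x) ∈ B}) and q = q^{π*}. If π and σ are stationary policies of the MDP defined by φ⁰ and φ¹ and q(X \ X(π,σ)) = 0, where X(π,σ) = {x ∈ X : π(·|x) = σ(·|x)}, then q^π = q^σ. -/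
open MeasureTheory ProbabilityTheory Filter Topology
open scoped ENNReal NNReal

section Aux

open PaperMDP

variable {S A : Type*} [MeasurableSpace S] [MeasurableSpace A]

lemma measurable_snocFun {Z : Type*} [MeasurableSpace Z] {n : ℕ} {β : Type*} [MeasurableSpace β]
    {f : Z → Fin n → β} {g : Z → β} (hf : Measurable f) (hg : Measurable g) :
    Measurable (fun z => Fin.snoc (f z) (g z) : Z → Fin (n + 1) → β) :=
  measurable_pi_lambda _ fun i => by
    cases i using Fin.lastCases with
    | last => simpa using hg
    | cast j => simpa [Function.comp_def] using (measurable_pi_apply j).comp hf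

/-- The one-step transition map of a stationary kernel. -/
noncomputable def stepFun (M : MDP S A) (κ : Kernel S A) (t : ℕ) (h : Hist S A t) :
    Measure (Hist S A (t + 1)) :=
  (κ (h.1 (Fin.last t))).bind (fun a =>
    (M.p (h.1 (Fin.last t), a)).map (fun y => (Fin.snoc h.1 y, Fin.snoc h.2 a)))

lemma measurable_inner (M : MDP S A) {t : ℕ} (h : Hist S A t) :
    Measurable (fun a : A => (M.p (h.1 (Fin.last t), a)).map
      (fun y => ((Fin.snoc h.1 y, Fin.snoc h.2 a) : Hist S A (t + 1)))) := by
  haveI := M.p_markov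
  apply Measure.measurable_of_measurable_coe
  intro s hs
  have hΦ : Measurable (fun q : A × S =>
      ((Fin.snoc h.1 q.2, Fin.snoc h.2 q.1) : Hist S A (t + 1))) :=
    (measurable_snocFun measurable_const measurable_snd).prodMk
      (measurable_snocFun measurable_const measurable_fst)
  have key : ∀ a : A,
      ((M.p (h.1 (Fin.last t), a)).map
        (fun y => ((Fin.snoc h.1 y, Fin.snoc h.2 a) : Hist S A (t + 1)))) s
      = (M.p.comap (fun a : A => (h.1 (Fin.last t), a))
          (measurable_const.prodMk measurable_id)) a
          (Prod.mk a ⁻¹' ((fun q : A × S =>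
            ((Fin.snoc h.1 q.2, Fin.snoc h.2 q.1) : Hist S A (t + 1))) ⁻¹' s)) := by
    intro a
    have hf : Measurable (fun y : S => ((Fin.snoc h.1 y, Fin.snoc h.2 a) : Hist S A (t + 1))) :=
      (measurable_snocFun measurable_const measurable_id).prodMk measurable_const
    rw [Measure.map_apply hf hs, Kernel.comap_apply]
    rfl
  simp_rw [key]
  exact Kernel.measurable_kernel_prodMk_left (hΦ hs)

lemma stepFun_apply (M : MDP S A) (κ : Kernel S A) (t : ℕ) (h : Hist S A t)
    {s : Set (Hist S A (t + 1))} (hs : MeasurableSet s) :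
    stepFun M κ t h s = ∫⁻ a, M.p (h.1 (Fin.last t), a)
      ((fun y => ((Fin.snoc h.1 y, Fin.snoc h.2 a) : Hist S A (t + 1))) ⁻¹' s)
      ∂(κ (h.1 (Fin.last t))) := by
  rw [stepFun, Measure.bind_apply hs (measurable_inner M h).aemeasurable]
  refine lintegral_congr fun a => ?_
  have hf : Measurable (fun y : S => ((Fin.snoc h.1 y, Fin.snoc h.2 a) : Hist S A (t + 1))) :=
    (measurable_snocFun measurable_const measurable_id).prodMk measurable_const
  exact Measure.map_apply hf hs

lemma measurable_stepFun (M : MDP S A) (κ : Kernel S A) [IsSFiniteKernel κ] (t : ℕ) :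
    Measurable (stepFun M κ t) := by
  haveI := M.p_markov
  apply Measure.measurable_of_measurable_coe
  intro s hs
  have hlast : Measurable (fun h : Hist S A t => h.1 (Fin.last t)) :=
    (measurable_pi_apply (Fin.last t)).comp measurable_fst
  have hΦ : Measurable (fun q : (Hist S A t × A) × S =>
      ((Fin.snoc q.1.1.1 q.2, Fin.snoc q.1.1.2 q.1.2) : Hist S A (t + 1))) :=
    (measurable_snocFun (measurable_fst.comp (measurable_fst.comp measurable_fst))
        measurable_snd).prodMk
      (measurable_snocFun (measurable_snd.comp (measurable_fst.comp measurable_fst))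
        (measurable_snd.comp measurable_fst))
  have hg : Measurable (fun z : Hist S A t × A => (z.1.1 (Fin.last t), z.2)) :=
    ((measurable_pi_apply (Fin.last t)).comp (measurable_fst.comp measurable_fst)).prodMk
      measurable_snd
  have key : ∀ h : Hist S A t, stepFun M κ t h s
      = ∫⁻ a, (M.p.comap (fun z : Hist S A t × A => (z.1.1 (Fin.last t), z.2)) hg) (h, a)
          (Prod.mk (h, a) ⁻¹' ((fun q : (Hist S A t × A) × S =>
            ((Fin.snoc q.1.1.1 q.2, Fin.snoc q.1.1.2 q.1.2) : Hist S A (t + 1))) ⁻¹' s))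
          ∂((κ.comap (fun h : Hist S A t => h.1 (Fin.last t)) hlast) h) := by
    intro h
    rw [stepFun_apply M κ t h hs]
    refine lintegral_congr fun a => ?_
    rw [Kernel.comap_apply]
    rfl
  simp_rw [key]
  exact Measurable.lintegral_kernel_prod_right'
    (κ := κ.comap (fun h : Hist S A t => h.1 (Fin.last t)) hlast)
    (Kernel.measurable_kernel_prodMk_left (hΦ hs))

lemma histMeas_stat_succ {M : MDP S A} (μ : Measure S) (s : StatPolicy M) (t : ℕ) :
    histMeas μ s.policy (t + 1) = (histMeas μ s.policy t).bind (stepFun M s.ker t) := rfl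

/-- A probability measure putting full mass on a singleton is the Dirac measure. -/
lemma eq_dirac_of_singleton {A : Type*} [MeasurableSpace A] [MeasurableSingletonClass A]
    {μ : Measure A} [IsProbabilityMeasure μ] {a : A} (h : μ {a} = 1) : μ = Measure.dirac a := by
  ext s hs
  rw [Measure.dirac_apply' _ hs]
  by_cases hm : a ∈ s
  · rw [Set.indicator_of_mem hm]
    refine le_antisymm prob_le_one ?_
    calc (1 : ℝ≥0∞) = μ {a} := h.symm
      _ ≤ μ s := measure_mono (Set.singleton_subset_iff.mpr hm)
  · rw [Set.indicator_of_notMem hm]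
    have hc : μ {a}ᶜ = 0 := by
      rw [measure_compl (measurableSet_singleton a) (measure_ne_top _ _), h, measure_univ,
        tsub_self]
    refine measure_mono_null (fun x hx => ?_) hc
    simp only [Set.mem_compl_iff, Set.mem_singleton_iff]
    rintro rfl
    exact hm hx

/-- Any stationary policy of the submodel is dominated by twice the mixing policy. -/
lemma ker_le_mix [MeasurableSingletonClass A] {M : MDP S A} {f0 f1 : Selector M}
    (π : StatPolicy M) (hπ : ∀ x, π.ker x {f0.toFun x, f1.toFun x} = 1) (x : S) :
    π.ker x ≤ (2 : ℝ≥0∞) • (mixStat f0 f1).ker x := by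
  haveI := π.prob
  refine Measure.le_iff.mpr fun s hs => ?_
  have hmix : ((2 : ℝ≥0∞) • (mixStat f0 f1).ker x) s
      = Measure.dirac (f0.toFun x) s + Measure.dirac (f1.toFun x) s := by
    show (2 : ℝ≥0∞) • (((2 : ℝ≥0∞)⁻¹ •
      (Measure.dirac (f0.toFun x) + Measure.dirac (f1.toFun x))) s) = _
    rw [Measure.smul_apply, smul_eq_mul, smul_eq_mul, ← mul_assoc,
      ENNReal.mul_inv_cancel two_ne_zero ENNReal.ofNat_ne_top, one_mul, Measure.add_apply]
  rw [hmix]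
  by_cases h0 : f0.toFun x ∈ s
  · calc π.ker x s ≤ 1 := prob_le_one
      _ ≤ _ := by
          rw [Measure.dirac_apply' _ hs, Set.indicator_of_mem h0]
          exact le_add_right le_rfl
  · by_cases h1 : f1.toFun x ∈ s
    · calc π.ker x s ≤ 1 := prob_le_one
        _ ≤ _ := by
            rw [Measure.dirac_apply' (f1.toFun x) hs, Set.indicator_of_mem h1]
            exact le_add_left le_rfl
    · have hpair : MeasurableSet ({f0.toFun x, f1.toFun x} : Set A) :=
        (measurableSet_singleton _).insert _
      have hc : π.ker x ({f0.toFun x, f1.toFun x}ᶜ) = 0 := by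
        rw [measure_compl hpair (measure_ne_top _ _), hπ x, measure_univ, tsub_self]
      have h0' : π.ker x s = 0 := by
        refine measure_mono_null (fun y hy => ?_) hc
        simp only [Set.mem_compl_iff, Set.mem_insert_iff, Set.mem_singleton_iff, not_or]
        exact ⟨fun e => h0 (e ▸ hy), fun e => h1 (e ▸ hy)⟩
      rw [h0']
      exact zero_le

/-- The finite-horizon strategic measure of a submodel stationary policy is dominated by
`2^t` times that of the mixing policy. -/
lemma hist_le_mix [MeasurableSingletonClass A] {M : MDP S A} (μ : Measure S)
    {f0 f1 : Selector M} (π : StatPolicy M) (hπ : ∀ x, π.ker x {f0.toFun x, f1.toFun x} = 1)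
    (t : ℕ) {s : Set (Hist S A t)} (hs : MeasurableSet s) :
    histMeas μ π.policy t s ≤ 2 ^ t * histMeas μ (mixStat f0 f1).policy t s := by
  haveI := π.prob
  haveI := (mixStat f0 f1).prob
  induction t with
  | zero =>
    rw [pow_zero, one_mul]
    exact le_of_eq rfl
  | succ t ih =>
    rw [histMeas_stat_succ μ π t, histMeas_stat_succ μ (mixStat f0 f1) t,
      Measure.bind_apply hs (measurable_stepFun M π.ker t).aemeasurable,
      Measure.bind_apply hs (measurable_stepFun M (mixStat f0 f1).ker t).aemeasurable]
    have hstep : ∀ h : Hist S A t, stepFun M π.ker t h s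
        ≤ 2 * stepFun M (mixStat f0 f1).ker t h s := by
      intro h
      rw [stepFun_apply M π.ker t h hs, stepFun_apply M (mixStat f0 f1).ker t h hs]
      calc ∫⁻ a, M.p (h.1 (Fin.last t), a)
            ((fun y => ((Fin.snoc h.1 y, Fin.snoc h.2 a) : Hist S A (t+1))) ⁻¹' s)
            ∂(π.ker (h.1 (Fin.last t)))
          ≤ ∫⁻ a, M.p (h.1 (Fin.last t), a)
            ((fun y => ((Fin.snoc h.1 y, Fin.snoc h.2 a) : Hist S A (t+1))) ⁻¹' s)
            ∂((2 : ℝ≥0∞) • (mixStat f0 f1).ker (h.1 (Fin.last t))) :=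
          lintegral_mono' (ker_le_mix π hπ _) le_rfl
        _ = 2 * _ := lintegral_smul_measure _ _
    calc ∫⁻ h, stepFun M π.ker t h s ∂(histMeas μ π.policy t)
        ≤ ∫⁻ h, 2 * stepFun M (mixStat f0 f1).ker t h s ∂(histMeas μ π.policy t) :=
        lintegral_mono hstep
      _ = 2 * ∫⁻ h, stepFun M (mixStat f0 f1).ker t h s ∂(histMeas μ π.policy t) :=
        lintegral_const_mul' _ _ ENNReal.ofNat_ne_top
      _ ≤ 2 * ∫⁻ h, stepFun M (mixStat f0 f1).ker t h s
          ∂((2 ^ t : ℝ≥0∞) • histMeas μ (mixStat f0 f1).policy t) := by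
        gcongr
        refine Measure.le_iff.mpr fun u hu => ?_
        rw [Measure.smul_apply, smul_eq_mul]
        exact ih hu
      _ = 2 ^ (t + 1) * ∫⁻ h, stepFun M (mixStat f0 f1).ker t h s
          ∂(histMeas μ (mixStat f0 f1).policy t) := by
        rw [lintegral_smul_measure, smul_eq_mul, ← mul_assoc, pow_succ, mul_comm (2 ^ t : ℝ≥0∞) 2]

end Aux


open PaperMDP in
/-- Uniformly absorbing MDP, two deterministic policies `φ⁰, φ¹`, mixing
policy `π*` with occupancy marginal `q`.  If two stationary policies `π, σ` of the submodel
defined by `φ⁰, φ¹` agree `q`-almost everywhere on `X`, then `q^π = q^σ`. -/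
theorem qMeas_eq_of_agree_q_ae
    {S A : Type*} [MeasurableSpace S] [StandardBorelSpace S]
    [MeasurableSpace A] [StandardBorelSpace A]
    (M : MDP S A) (μ : MeasureTheory.Measure S) (star : S) (abar : A)
    {N : ℕ} (r : S × A → Fin N → ℝ)
    (hU : UnifAbsorbing M μ r star abar)
    (f0 f1 : Selector M)
    (π σ : StatPolicy M)
    (hπ : ∀ x : S, π.ker x {f0.toFun x, f1.toFun x} = 1)
    (hσ : ∀ x : S, σ.ker x {f0.toFun x, f1.toFun x} = 1)
    (hq : qMeas μ (mixStat f0 f1).policy star {x : S | x ≠ star ∧ π.ker x ≠ σ.ker x} = 0) :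
    qMeas μ π.policy star = qMeas μ σ.policy star := by
  haveI := π.prob
  haveI := σ.prob
  haveI := (mixStat f0 f1).prob
  -- the kernels of π and σ agree at the absorbing state
  have hker_star : π.ker star = σ.ker star := by
    have h1 : π.ker star {abar} = 1 := by
      have h := π.feasible star
      rwa [hU.act_star, Set.setOf_mem_eq] at h
    have h2 : σ.ker star {abar} = 1 := by
      have h := σ.feasible star
      rwa [hU.act_star, Set.setOf_mem_eq] at h
    rw [eq_dirac_of_singleton h1, eq_dirac_of_singleton h2]
  -- a measurable null superset of the disagreement set
  obtain ⟨t0, hsub, ht0m, ht0⟩ := exists_measurable_superset_of_null hq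
  set E : Set S := t0 ∩ {x | x ≠ star} with hEdef
  have hEm : MeasurableSet E := ht0m.inter (measurableSet_singleton star).compl
  have hqE : qMeas μ (mixStat f0 f1).policy star E = 0 :=
    measure_mono_null Set.inter_subset_left ht0
  have hmix0 : ∀ n, stateMeas μ (mixStat f0 f1).policy n E = 0 := by
    intro n
    have hsum : (∑' n, qn μ (mixStat f0 f1).policy star n E) = 0 := by
      rw [← Measure.sum_apply _ hEm]
      exact hqE
    have h0 := (ENNReal.tsum_eq_zero.mp hsum) n
    rw [qn, Measure.restrict_apply hEm] at h0
    rwa [Set.inter_eq_self_of_subset_left Set.inter_subset_right] at h0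
  have hπ0 : ∀ n, stateMeas μ π.policy n E = 0 := by
    intro n
    have hlast : Measurable (fun h : Hist S A n => h.1 (Fin.last n)) :=
      (measurable_pi_apply (Fin.last n)).comp measurable_fst
    have hb := hist_le_mix μ π hπ n (hlast hEm)
    have hle : stateMeas μ π.policy n E ≤ 2 ^ n * stateMeas μ (mixStat f0 f1).policy n E := by
      unfold stateMeas
      rw [Measure.map_apply hlast hEm, Measure.map_apply hlast hEm]
      exact hb
    rw [hmix0 n, mul_zero] at hle
    exact le_antisymm hle zero_le
  -- the finite-horizon strategic measures agree
  have hist_eq : ∀ t, histMeas μ π.policy t = histMeas μ σ.policy t := by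
    intro t
    induction t with
    | zero => rfl
    | succ t ih =>
      have hlast : Measurable (fun h : Hist S A t => h.1 (Fin.last t)) :=
        (measurable_pi_apply (Fin.last t)).comp measurable_fst
      have hsub2 : {h : Hist S A t | ¬ stepFun M π.ker t h = stepFun M σ.ker t h}
          ⊆ (fun h : Hist S A t => h.1 (Fin.last t)) ⁻¹' E := by
        intro h hh
        by_contra hnE
        apply hh
        have hkeq : π.ker (h.1 (Fin.last t)) = σ.ker (h.1 (Fin.last t)) := by
          by_cases hstar : h.1 (Fin.last t) = star
          · rw [hstar]; exact hker_star
          · by_contra hne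
            exact hnE ⟨hsub ⟨hstar, hne⟩, hstar⟩
        simp only [stepFun]
        rw [hkeq]
      have h0 : (histMeas μ π.policy t) ((fun h : Hist S A t => h.1 (Fin.last t)) ⁻¹' E) = 0 := by
        have h := hπ0 t
        unfold stateMeas at h
        rwa [Measure.map_apply hlast hEm] at h
      have hae : stepFun M π.ker t =ᵐ[histMeas μ π.policy t] stepFun M σ.ker t := by
        rw [Filter.EventuallyEq, ae_iff]
        exact measure_mono_null hsub2 h0
      calc histMeas μ π.policy (t + 1)
          = (histMeas μ π.policy t).bind (stepFun M π.ker t) := histMeas_stat_succ μ π t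
        _ = (histMeas μ π.policy t).bind (stepFun M σ.ker t) := by
            show ((histMeas μ π.policy t).map (stepFun M π.ker t)).join = _
            rw [Measure.map_congr hae]
            rfl
        _ = (histMeas μ σ.policy t).bind (stepFun M σ.ker t) := by rw [ih]
        _ = histMeas μ σ.policy (t + 1) := (histMeas_stat_succ μ σ t).symm
  unfold qMeas
  congr 1
  funext n
  unfold qn stateMeas
  rw [hist_eq n]
end
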